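/- If a Kohnert move applied to a lock Kohnert diagram of content a yields a diagram D', then D' admits a (necessarily unique) lock Kohnert tableau labeling of content a; equivalently, the set of underlying diagrams of lock Kohnert tableaux of content a is closed under Kohnert moves and equals the set of lock Kohnert diagrams of a. -/
import Mathlib


open scoped Classical

/-- A Kohnert move: take the rightmost cell of row `r` and move it down in its
column to the highest open row `r'` below (rows indexed from 1). Cells are `(row, column)`. -/
def KohnertMove (D D' : Finset (ℕ × ℕ)) : Prop :=
  ∃ r c r', (r, c) ∈ D ∧ (∀ c', (r, c') ∈ D → c' ≤ c) ∧
    1 ≤ r' ∧ r' < r ∧ (r', c) ∉ D ∧ (∀ r'', r' < r'' → r'' < r → (r'', c) ∈ D) ∧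
    D' = insert (r', c) (D.erase (r, c))

/-- The largest part of a weak composition. -/
def maxPart (a : List ℕ) : ℕ := a.foldr max 0

/-- Number of cells of a diagram in row `i`. -/
def rowWeight (D : Finset (ℕ × ℕ)) (i : ℕ) : ℕ :=
  (D.filter (fun p => p.1 = i)).card

/-- The weight of a diagram, as a finitely supported function recording the
number of cells in each row. -/
noncomputable def wtF (D : Finset (ℕ × ℕ)) : ℕ →₀ ℕ := ∑ p ∈ D, Finsupp.single p.1 1

/-- The exponent vector `x^a` of a weak composition `a` (1-based variables). -/
noncomputable def compFinsupp (a : List ℕ) : ℕ →₀ ℕ :=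
  ∑ i ∈ Finset.range a.length, Finsupp.single (i + 1) (a.getD i 0)

/-- The lock (right-justified) diagram of a weak composition `a`. -/
def lockDiagram (a : List ℕ) : Finset (ℕ × ℕ) :=
  (Finset.Icc 1 a.length ×ˢ Finset.Icc 1 (maxPart a)).filter
    (fun p => maxPart a - a.getD (p.1 - 1) 0 < p.2)

/-- The set of lock Kohnert diagrams of `a`: all diagrams obtainable from the
lock diagram of `a` by sequences of Kohnert moves. -/
noncomputable def LDset (a : List ℕ) : Finset (Finset (ℕ × ℕ)) :=
  ((Finset.Icc 1 a.length ×ˢ Finset.Icc 1 (maxPart a)).powerset).filter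
    (fun D => Relation.ReflTransGen KohnertMove (lockDiagram a) D)

/-- The lock polynomial `𝔏_a = Σ_{D} x^{wt(D)}` over lock Kohnert diagrams of `a`. -/
noncomputable def lockPoly (a : List ℕ) : MvPolynomial ℕ ℤ :=
  ∑ D ∈ LDset a, MvPolynomial.monomial (wtF D) (1 : ℤ)

/-- A labeled diagram is a finite set of triples `(row, column, label)`. The
underlying diagram forgets the labels. -/
def Tcells (T : Finset (ℕ × ℕ × ℕ)) : Finset (ℕ × ℕ) := T.image (fun t => (t.1, t.2.1))

/-- The weight of a labeled diagram records the number of cells in each row. -/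
noncomputable def wtT (T : Finset (ℕ × ℕ × ℕ)) : ℕ →₀ ℕ := ∑ t ∈ T, Finsupp.single t.1 1

/-- Lock Kohnert tableau of content `a`: one label per cell; exactly one `i` in
each column from `max(a) - a_i + 1` through `max(a)`; entries in row `r` are at
least `r` (and labels lie in `1..n`); cells with a fixed label weakly descend
from left to right; labels strictly decrease down columns. -/
def IsLKTF (a : List ℕ) (T : Finset (ℕ × ℕ × ℕ)) : Prop :=
  (∀ t ∈ T, ∀ t' ∈ T, t.1 = t'.1 → t.2.1 = t'.2.1 → t = t') ∧
  (∀ i ∈ Finset.Icc 1 a.length, ∀ c : ℕ,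
      (T.filter (fun t => t.2.1 = c ∧ t.2.2 = i)).card =
        if maxPart a - a.getD (i - 1) 0 < c ∧ c ≤ maxPart a then 1 else 0) ∧
  (∀ t ∈ T, 1 ≤ t.1 ∧ t.1 ≤ t.2.2 ∧ 1 ≤ t.2.2 ∧ t.2.2 ≤ a.length) ∧
  (∀ t ∈ T, ∀ t' ∈ T, t.2.2 = t'.2.2 → t.2.1 < t'.2.1 → t'.1 ≤ t.1) ∧
  (∀ t ∈ T, ∀ t' ∈ T, t.2.1 = t'.2.1 → t.1 < t'.1 → t.2.2 < t'.2.2)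

/-- `flat(a)`: the nonzero parts of `a`, in order. -/
def flatC (a : List ℕ) : List ℕ := a.filter (fun x => x ≠ 0)

lemma mem_le_foldr_max (l : List ℕ) : ∀ x ∈ l, x ≤ l.foldr max 0 := by
  induction l with
  | nil => simp
  | cons a t ih =>
    intro x hx
    rcases List.mem_cons.mp hx with h | h
    · subst h; exact le_max_left _ _
    · exact le_trans (ih x h) (le_max_right _ _)

lemma getD_le_maxPart (a : List ℕ) (i : ℕ) : a.getD i 0 ≤ maxPart a := by
  unfold maxPart
  rcases lt_or_ge i a.length with h | h
  · rw [List.getD_eq_getElem _ _ h]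
    exact mem_le_foldr_max a _ (List.getElem_mem h)
  · rw [List.getD_eq_default _ _ h]; exact Nat.zero_le _

/-- Every cell of an LKT has (label's) column range satisfied. -/
lemma lkt_mem_range {a : List ℕ} {T : Finset (ℕ × ℕ × ℕ)} (h : IsLKTF a T)
    {t : ℕ × ℕ × ℕ} (ht : t ∈ T) :
    maxPart a - a.getD (t.2.2 - 1) 0 < t.2.1 ∧ t.2.1 ≤ maxPart a := by
  obtain ⟨h1, h2, h3, h4, h5⟩ := h
  have hi := h3 t ht
  have hIcc : t.2.2 ∈ Finset.Icc 1 a.length := Finset.mem_Icc.mpr ⟨hi.2.2.1, hi.2.2.2⟩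
  have hc := h2 t.2.2 hIcc t.2.1
  by_contra hcon
  rw [if_neg hcon] at hc
  have : t ∈ T.filter (fun s => s.2.1 = t.2.1 ∧ s.2.2 = t.2.2) :=
    Finset.mem_filter.mpr ⟨ht, rfl, rfl⟩
  have := Finset.card_pos.mpr ⟨t, this⟩
  omega

/-- Two cells with the same column and label coincide. -/
lemma lkt_col_label_unique {a : List ℕ} {T : Finset (ℕ × ℕ × ℕ)} (h : IsLKTF a T)
    {t t' : ℕ × ℕ × ℕ} (ht : t ∈ T) (ht' : t' ∈ T)
    (hc : t.2.1 = t'.2.1) (hl : t.2.2 = t'.2.2) : t = t' := by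
  obtain ⟨h1, h2, h3, h4, h5⟩ := h
  have hi := h3 t ht
  have hIcc : t.2.2 ∈ Finset.Icc 1 a.length := Finset.mem_Icc.mpr ⟨hi.2.2.1, hi.2.2.2⟩
  have hc2 := h2 t.2.2 hIcc t.2.1
  have hcard : (T.filter (fun s => s.2.1 = t.2.1 ∧ s.2.2 = t.2.2)).card ≤ 1 := by
    rw [hc2]; split <;> omega
  have htm : t ∈ T.filter (fun s => s.2.1 = t.2.1 ∧ s.2.2 = t.2.2) :=
    Finset.mem_filter.mpr ⟨ht, rfl, rfl⟩
  have htm' : t' ∈ T.filter (fun s => s.2.1 = t.2.1 ∧ s.2.2 = t.2.2) :=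
    Finset.mem_filter.mpr ⟨ht', hc.symm, hl.symm⟩
  exact Finset.card_le_one.mp hcard t htm t' htm'

/-- If label `i` is valid in column `c`, there is a cell with that column and label. -/
lemma lkt_exists_col_label {a : List ℕ} {T : Finset (ℕ × ℕ × ℕ)} (h : IsLKTF a T)
    {i c : ℕ} (hi : 1 ≤ i) (hn : i ≤ a.length)
    (hrange : maxPart a - a.getD (i - 1) 0 < c ∧ c ≤ maxPart a) :
    ∃ u ∈ T, u.2.1 = c ∧ u.2.2 = i := by
  obtain ⟨h1, h2, h3, h4, h5⟩ := h
  have hc := h2 i (Finset.mem_Icc.mpr ⟨hi, hn⟩) c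
  rw [if_pos hrange] at hc
  obtain ⟨u, hu⟩ := Finset.card_pos.mp (by omega : 0 < (T.filter (fun t => t.2.1 = c ∧ t.2.2 = i)).card)
  obtain ⟨hu1, hu2, hu3⟩ := Finset.mem_filter.mp hu
  exact ⟨u, hu1, hu2, hu3⟩
/-- Key lemma: if a cell in the "moved block" of column `c` has its label also
appearing in a column to the right, that occurrence is strictly above. -/
lemma lkt_key {a : List ℕ} {T : Finset (ℕ × ℕ × ℕ)} (h : IsLKTF a T)
    {r r' c : ℕ}
    (hfill : ∀ j, r' < j → j ≤ r → ∃ u ∈ T, u.1 = j ∧ u.2.1 = c)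
    (hright : ∀ u ∈ T, u.1 = r → u.2.1 ≤ c)
    {t t' : ℕ × ℕ × ℕ} (ht : t ∈ T) (hcol : t.2.1 = c) (hx1 : r' < t.1) (hx2 : t.1 ≤ r)
    (ht' : t' ∈ T) (hlab : t'.2.2 = t.2.2) (hc : c < t'.2.1) :
    t'.1 < t.1 := by
  obtain ⟨h1, h2, h3, h4, h5⟩ := h
  have hle : t'.1 ≤ t.1 := h4 t ht t' ht' hlab.symm (by omega)
  rcases lt_or_eq_of_le hle with hlt | heq
  · exact hlt
  exfalso
  -- build the ladder upwards
  have main : ∀ k, t.1 + k ≤ r →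
      ∃ s ∈ T, ∃ u ∈ T, u.1 = t.1 + k ∧ u.2.1 = c ∧
        s.1 = t.1 + k ∧ s.2.1 = t'.2.1 ∧ s.2.2 = u.2.2 := by
    intro k
    induction k with
    | zero =>
      intro _
      exact ⟨t', ht', t, ht, by omega, hcol, by omega, rfl, hlab⟩
    | succ k ih =>
      intro hk
      obtain ⟨s, hs, u, hu, hu1, hu2, hs1, hs2, hs3⟩ := ih (by omega)
      obtain ⟨u2, hu2m, hu21, hu22⟩ := hfill (t.1 + (k+1)) (by omega) hk
      have hlabgt : u.2.2 < u2.2.2 := h5 u hu u2 hu2m (by rw [hu2, hu22]) (by omega)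
      have hrange2 := lkt_mem_range ⟨h1, h2, h3, h4, h5⟩ hu2m
      have hranget' := lkt_mem_range ⟨h1, h2, h3, h4, h5⟩ ht'
      have hbounds := h3 u2 hu2m
      obtain ⟨v, hv, hv1, hv2⟩ := lkt_exists_col_label ⟨h1, h2, h3, h4, h5⟩
        hbounds.2.2.1 hbounds.2.2.2
        (⟨by omega, hranget'.2⟩ : maxPart a - a.getD (u2.2.2 - 1) 0 < t'.2.1 ∧ t'.2.1 ≤ maxPart a)
      -- v : cell in column t'.2.1 with label u2.2.2
      have hvle : v.1 ≤ u2.1 := h4 u2 hu2m v hv hv2.symm (by omega)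
      have hveq : v.1 = t.1 + (k+1) := by
        rcases lt_or_eq_of_le hvle with hvlt | hveq
        · exfalso
          rcases lt_trichotomy v.1 s.1 with hc1 | hc1 | hc1
          · have := h5 v hv s hs (by rw [hv1, hs2]) hc1
            omega
          · have := h1 v hv s hs (by omega) (by rw [hv1, hs2])
            rw [this] at hv2; omega
          · omega
        · omega
      exact ⟨v, hv, u2, hu2m, hu21, hu22, hveq, hv1, hv2⟩
  obtain ⟨s, hs, u, hu, hu1, hu2, hs1, hs2, hs3⟩ := main (r - t.1) (by omega)
  have := hright s hs (by omega)
  omega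
lemma card_filter_image {α β : Type*} [DecidableEq β] (T : Finset α) (f : α → β)
    (hinj : Set.InjOn f T) (P : β → Prop) [DecidablePred P] :
    ((T.image f).filter P).card = (T.filter (fun t => P (f t))).card := by
  rw [Finset.filter_image]
  exact Finset.card_image_of_injOn (hinj.mono (by intro x hx; exact (Finset.mem_filter.mp hx).1))

lemma lkt_closure (a : List ℕ) (T : Finset (ℕ × ℕ × ℕ)) (D' : Finset (ℕ × ℕ))
    (h : IsLKTF a T) (hm : KohnertMove (Tcells T) D') :
    ∃ T', IsLKTF a T' ∧ Tcells T' = D' := by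
  classical
  obtain ⟨r, c, r', hrc, hright, hr'1, hr'r, hempty, hbetween, hD'⟩ := hm
  obtain ⟨h1, h2, h3, h4, h5⟩ := h
  -- cells facts
  have hfill : ∀ j, r' < j → j ≤ r → ∃ u ∈ T, u.1 = j ∧ u.2.1 = c := by
    intro j hj1 hj2
    rcases eq_or_lt_of_le hj2 with heq | hlt
    · obtain ⟨u, hu, hu2⟩ := Finset.mem_image.mp hrc
      exact ⟨u, hu, by rw [← heq] at hu2; exact ⟨congrArg Prod.fst hu2, congrArg Prod.snd hu2⟩⟩
    · obtain ⟨u, hu, hu2⟩ := Finset.mem_image.mp (hbetween j hj1 hlt)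
      exact ⟨u, hu, congrArg Prod.fst hu2, congrArg Prod.snd hu2⟩
  have hrightT : ∀ u ∈ T, u.1 = r → u.2.1 ≤ c := by
    intro u hu hur
    exact hright u.2.1 (Finset.mem_image.mpr ⟨u, hu, by rw [hur]⟩)
  have hemptyT : ∀ u ∈ T, ¬(u.1 = r' ∧ u.2.1 = c) := by
    rintro u hu ⟨h1', h2'⟩
    exact hempty (Finset.mem_image.mpr ⟨u, hu, by rw [h1', h2']⟩)
  have hfillD : ∀ j, r' < j → j ≤ r → (j, c) ∈ Tcells T := by
    intro j hj1 hj2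
    rcases Nat.lt_or_ge j r with hlt | hge
    · exact hbetween j hj1 hlt
    · have : j = r := by omega
      rw [this]; exact hrc
  set f : ℕ × ℕ × ℕ → ℕ × ℕ × ℕ :=
    fun t => if t.2.1 = c ∧ r' < t.1 ∧ t.1 ≤ r then (t.1 - 1, t.2.1, t.2.2) else t with hf
  have fsnd : ∀ t, (f t).2 = t.2 := by intro t; rw [hf]; dsimp only; split <;> rfl
  have fblk : ∀ t, (t.2.1 = c ∧ r' < t.1 ∧ t.1 ≤ r) → f t = (t.1 - 1, t.2.1, t.2.2) := by
    intro t htb; rw [hf]; dsimp only; rw [if_pos htb]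
  have fnblk : ∀ t, ¬(t.2.1 = c ∧ r' < t.1 ∧ t.1 ≤ r) → f t = t := by
    intro t htb; rw [hf]; dsimp only; rw [if_neg htb]
  have hinj : Set.InjOn f T := by
    intro t ht t' ht' heq
    have hsnd : t.2 = t'.2 := by rw [← fsnd t, ← fsnd t', heq]
    exact lkt_col_label_unique ⟨h1, h2, h3, h4, h5⟩ ht ht'
      (congrArg Prod.fst hsnd) (congrArg Prod.snd hsnd)
  refine ⟨T.image f, ⟨?_, ?_, ?_, ?_, ?_⟩, ?_⟩
  · -- condition 1
    rintro u hu v hv hrow hcol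
    obtain ⟨t, ht, rfl⟩ := Finset.mem_image.mp hu
    obtain ⟨t', ht', rfl⟩ := Finset.mem_image.mp hv
    by_cases hb : t.2.1 = c ∧ r' < t.1 ∧ t.1 ≤ r <;>
      by_cases hb' : t'.2.1 = c ∧ r' < t'.1 ∧ t'.1 ≤ r
    · rw [fblk t hb, fblk t' hb'] at hrow hcol ⊢
      have : t = t' := h1 t ht t' ht' (by simp at hrow; omega) (by simpa using hcol)
      rw [this]
    · exfalso
      rw [fblk t hb, fnblk t' hb'] at hrow hcol
      simp only at hrow hcol
      -- t' at (t.1 - 1, c)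
      have hc' : t'.2.1 = c := by rw [← hcol, hb.1]
      have : t'.1 = r' := by
        rcases (not_and.mp hb' hc') with h'
        omega
      exact hemptyT t' ht' ⟨this, hc'⟩
    · exfalso
      rw [fnblk t hb, fblk t' hb'] at hrow hcol
      simp only at hrow hcol
      have hc' : t.2.1 = c := by rw [hcol, hb'.1]
      have : t.1 = r' := by
        rcases (not_and.mp hb hc') with h'
        omega
      exact hemptyT t ht ⟨this, hc'⟩
    · rw [fnblk t hb, fnblk t' hb'] at hrow hcol ⊢
      rw [h1 t ht t' ht' hrow hcol]
  · -- condition 2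
    intro i hi c0
    rw [card_filter_image T f hinj]
    rw [← h2 i hi c0]
    congr 1
    apply Finset.filter_congr
    intro t _
    rw [show (f t).2.1 = t.2.1 from congrArg Prod.fst (fsnd t),
        show (f t).2.2 = t.2.2 from congrArg Prod.snd (fsnd t)]
  · -- condition 3
    rintro u hu
    obtain ⟨t, ht, rfl⟩ := Finset.mem_image.mp hu
    have hb3 := h3 t ht
    by_cases hb : t.2.1 = c ∧ r' < t.1 ∧ t.1 ≤ r
    · rw [fblk t hb]; simp only; omega
    · rw [fnblk t hb]; exact hb3
  · -- condition 4
    rintro u hu v hv hlab hcol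
    obtain ⟨t, ht, rfl⟩ := Finset.mem_image.mp hu
    obtain ⟨t', ht', rfl⟩ := Finset.mem_image.mp hv
    have hlab' : t.2.2 = t'.2.2 := by
      rw [← congrArg Prod.snd (fsnd t), ← congrArg Prod.snd (fsnd t'), hlab]
    have hcol' : t.2.1 < t'.2.1 := by
      rw [congrArg Prod.fst (fsnd t), congrArg Prod.fst (fsnd t')] at hcol
      exact hcol
    have hold : t'.1 ≤ t.1 := h4 t ht t' ht' hlab' hcol'
    by_cases hb : t.2.1 = c ∧ r' < t.1 ∧ t.1 ≤ r <;>
      by_cases hb' : t'.2.1 = c ∧ r' < t'.1 ∧ t'.1 ≤ r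
    · omega
    · -- t in block, t' to the right: key lemma
      rw [fblk t hb, fnblk t' hb']
      simp only
      have hkey : t'.1 < t.1 := lkt_key ⟨h1, h2, h3, h4, h5⟩ hfill hrightT ht hb.1 hb.2.1 hb.2.2
        ht' hlab'.symm (by rw [← hb.1]; exact hcol')
      omega
    · rw [fnblk t hb, fblk t' hb']
      simp only
      omega
    · rw [fnblk t hb, fnblk t' hb']
      exact hold
  · -- condition 5
    rintro u hu v hv hcol hrow
    obtain ⟨t, ht, rfl⟩ := Finset.mem_image.mp hu
    obtain ⟨t', ht', rfl⟩ := Finset.mem_image.mp hv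
    have hcol' : t.2.1 = t'.2.1 := by
      rw [← congrArg Prod.fst (fsnd t), ← congrArg Prod.fst (fsnd t'), hcol]
    rw [show ((f t).2.2 : ℕ) = t.2.2 from congrArg Prod.snd (fsnd t),
        show ((f t').2.2 : ℕ) = t'.2.2 from congrArg Prod.snd (fsnd t')]
    have goal : t.1 < t'.1 → t.2.2 < t'.2.2 := h5 t ht t' ht' hcol'
    by_cases hb : t.2.1 = c ∧ r' < t.1 ∧ t.1 ≤ r <;>
      by_cases hb' : t'.2.1 = c ∧ r' < t'.1 ∧ t'.1 ≤ r
    · rw [fblk t hb, fblk t' hb'] at hrow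
      simp only at hrow
      exact goal (by omega)
    · rw [fblk t hb, fnblk t' hb'] at hrow
      simp only at hrow
      have hc' : t'.2.1 = c := by rw [← hcol', hb.1]
      have h' : t'.1 ≤ r' ∨ r < t'.1 := by
        rcases (not_and.mp hb' hc') with h'
        omega
      exact goal (by omega)
    · rw [fnblk t hb, fblk t' hb'] at hrow
      simp only at hrow
      exact goal (by omega)
    · rw [fnblk t hb, fnblk t' hb'] at hrow
      exact goal hrow
  · -- Tcells (T.image f) = D'
    rw [hD']
    set D := Tcells T with hD
    set g : ℕ × ℕ → ℕ × ℕ :=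
      fun p => if p.2 = c ∧ r' < p.1 ∧ p.1 ≤ r then (p.1 - 1, p.2) else p with hg
    have gblk : ∀ p : ℕ × ℕ, (p.2 = c ∧ r' < p.1 ∧ p.1 ≤ r) → g p = (p.1 - 1, p.2) := by
      intro p hp; rw [hg]; dsimp only; rw [if_pos hp]
    have gnblk : ∀ p : ℕ × ℕ, ¬(p.2 = c ∧ r' < p.1 ∧ p.1 ≤ r) → g p = p := by
      intro p hp; rw [hg]; dsimp only; rw [if_neg hp]
    have hTg : Tcells (T.image f) = D.image g := by
      rw [hD]
      unfold Tcells
      rw [Finset.image_image, Finset.image_image]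
      apply Finset.image_congr
      intro t _
      simp only [Function.comp]
      by_cases hb : t.2.1 = c ∧ r' < t.1 ∧ t.1 ≤ r
      · rw [fblk t hb, hg]; simp only; rw [if_pos hb]
      · rw [fnblk t hb, hg]; simp only; rw [if_neg hb]
    rw [hTg]
    apply Finset.ext
    intro p
    constructor
    · intro hp
      obtain ⟨q, hq, rfl⟩ := Finset.mem_image.mp hp
      by_cases hb : q.2 = c ∧ r' < q.1 ∧ q.1 ≤ r
      · rw [gblk q hb]
        rcases eq_or_lt_of_le (Nat.succ_le_of_lt hb.2.1) with heq | hlt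
        · have hqq : (q.1 - 1, q.2) = (r', c) := by
            rw [hb.1]; exact Prod.ext (by omega) rfl
          rw [hqq]; exact Finset.mem_insert_self _ _
        · apply Finset.mem_insert_of_mem
          rw [Finset.mem_erase]
          constructor
          · intro hcon
            have : q.1 - 1 = r := congrArg Prod.fst hcon
            omega
          · rw [hb.1]
            have : (q.1 - 1, c) ∈ D := by
              have := hbetween (q.1 - 1) (by omega) (by omega)
              rwa [hD]
            exact this
      · rw [gnblk q hb]
        apply Finset.mem_insert_of_mem
        rw [Finset.mem_erase]
        refine ⟨?_, hq⟩
        intro hcon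
        apply hb
        rw [hcon]
        exact ⟨rfl, hr'r, le_refl r⟩
    · intro hp
      rcases Finset.mem_insert.mp hp with heq | hmem
      · refine Finset.mem_image.mpr ⟨(r' + 1, c), hfillD (r' + 1) (by omega) (by omega), ?_⟩
        rw [gblk (r' + 1, c) ⟨rfl, by omega, by omega⟩, heq]
        simp
      · rw [Finset.mem_erase] at hmem
        obtain ⟨hne, hmem⟩ := hmem
        by_cases hb : p.2 = c ∧ r' < p.1 ∧ p.1 ≤ r
        · -- p.1 < r since p ≠ (r,c)
          have hplt : p.1 < r := by
            rcases eq_or_lt_of_le hb.2.2 with heq' | hlt'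
            · exfalso; apply hne
              have : p = (p.1, p.2) := rfl
              rw [this, heq', hb.1]
            · exact hlt'
          refine Finset.mem_image.mpr ⟨(p.1 + 1, c), hfillD (p.1 + 1) (by omega) (by omega), ?_⟩
          rw [gblk (p.1 + 1, c) ⟨rfl, by omega, by omega⟩]
          simp only [Nat.add_sub_cancel]
          exact Prod.ext rfl hb.1.symm
        · exact Finset.mem_image.mpr ⟨p, hmem, gnblk p hb⟩
lemma lock_mem (a : List ℕ) (p : ℕ × ℕ) : p ∈ lockDiagram a ↔
    (1 ≤ p.1 ∧ p.1 ≤ a.length ∧ 1 ≤ p.2 ∧ p.2 ≤ maxPart a ∧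
      maxPart a - a.getD (p.1 - 1) 0 < p.2) := by
  unfold lockDiagram
  simp only [Finset.mem_filter, Finset.mem_product, Finset.mem_Icc]
  tauto

lemma lock_cond_iff (a : List ℕ) (i c : ℕ) (hi1 : 1 ≤ i) (hi2 : i ≤ a.length) :
    (i, c) ∈ lockDiagram a ↔ (maxPart a - a.getD (i - 1) 0 < c ∧ c ≤ maxPart a) := by
  rw [lock_mem]
  constructor
  · rintro ⟨_, _, _, h4, h5⟩; exact ⟨h5, h4⟩
  · rintro ⟨hh1, hh2⟩
    exact ⟨hi1, hi2, by omega, hh2, hh1⟩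

lemma lock_base (a : List ℕ) :
    IsLKTF a ((lockDiagram a).image (fun p => (p.1, p.2, p.1))) ∧
      Tcells ((lockDiagram a).image (fun p => (p.1, p.2, p.1))) = lockDiagram a := by
  classical
  set f : ℕ × ℕ → ℕ × ℕ × ℕ := fun p => (p.1, p.2, p.1) with hf
  have hinj : Set.InjOn f (lockDiagram a) := by
    intro p _ q _ h
    have h1 : p.1 = q.1 := congrArg (fun t : ℕ × ℕ × ℕ => t.1) h
    have h2 : p.2 = q.2 := congrArg (fun t : ℕ × ℕ × ℕ => t.2.1) h
    exact Prod.ext h1 h2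
  constructor
  · refine ⟨?_, ?_, ?_, ?_, ?_⟩
    · rintro u hu v hv hrow hcol
      obtain ⟨p, hp, rfl⟩ := Finset.mem_image.mp hu
      obtain ⟨q, hq, rfl⟩ := Finset.mem_image.mp hv
      rw [hinj hp hq (Prod.ext hrow (Prod.ext hcol hrow))]
    · intro i hi c
      rw [card_filter_image _ f hinj]
      obtain ⟨hi1, hi2⟩ := Finset.mem_Icc.mp hi
      by_cases hcond : maxPart a - a.getD (i - 1) 0 < c ∧ c ≤ maxPart a
      · rw [if_pos hcond]
        have : (lockDiagram a).filter (fun p => (f p).2.1 = c ∧ (f p).2.2 = i) = {(i, c)} := by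
          apply Finset.ext
          intro q
          simp only [Finset.mem_filter, Finset.mem_singleton, hf]
          constructor
          · rintro ⟨hq, hq1, hq2⟩
            exact Prod.ext hq2 hq1
          · rintro rfl
            exact ⟨(lock_cond_iff a i c hi1 hi2).mpr hcond, rfl, rfl⟩
        rw [this, Finset.card_singleton]
      · rw [if_neg hcond]
        have : (lockDiagram a).filter (fun p => (f p).2.1 = c ∧ (f p).2.2 = i) = ∅ := by
          apply Finset.ext
          intro q
          simp only [Finset.mem_filter, Finset.notMem_empty, iff_false, hf]
          rintro ⟨hq, hq1, hq2⟩
          have : q = (i, c) := Prod.ext hq2 hq1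
          rw [this] at hq
          exact hcond ((lock_cond_iff a i c hi1 hi2).mp hq)
        rw [this, Finset.card_empty]
    · rintro u hu
      obtain ⟨p, hp, rfl⟩ := Finset.mem_image.mp hu
      rw [lock_mem] at hp
      exact ⟨hp.1, le_refl _, hp.1, hp.2.1⟩
    · rintro u hu v hv hlab _
      obtain ⟨p, hp, rfl⟩ := Finset.mem_image.mp hu
      obtain ⟨q, hq, rfl⟩ := Finset.mem_image.mp hv
      simp only [hf] at hlab ⊢
      omega
    · rintro u hu v hv _ hrow
      obtain ⟨p, hp, rfl⟩ := Finset.mem_image.mp hu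
      obtain ⟨q, hq, rfl⟩ := Finset.mem_image.mp hv
      simp only [hf] at hrow ⊢
      omega
  · unfold Tcells
    rw [Finset.image_image]
    have : ((fun t : ℕ × ℕ × ℕ => (t.1, t.2.1)) ∘ f) = id := by
      funext p; rfl
    rw [this, Finset.image_id]

lemma lkt_min (a : List ℕ) (T : Finset (ℕ × ℕ × ℕ)) (h : IsLKTF a T)
    (hall : ∀ t ∈ T, t.2.2 = t.1) : Tcells T = lockDiagram a := by
  apply Finset.ext
  intro p
  constructor
  · intro hp
    obtain ⟨t, ht, rfl⟩ := Finset.mem_image.mp hp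
    have hb := h.2.2.1 t ht
    have hr := lkt_mem_range h ht
    have he := hall t ht
    rw [lock_mem]
    refine ⟨hb.1, by omega, by omega, hr.2, ?_⟩
    have : t.2.2 - 1 = t.1 - 1 := by omega
    rw [← this]; exact hr.1
  · intro hp
    rw [lock_mem] at hp
    obtain ⟨u, hu, hu1, hu2⟩ := lkt_exists_col_label h hp.1 hp.2.1 ⟨hp.2.2.2.2, hp.2.2.2.1⟩
    have he := hall u hu
    refine Finset.mem_image.mpr ⟨u, hu, ?_⟩
    exact Prod.ext (by omega) hu1
lemma lkt_inverse (a : List ℕ) (T : Finset (ℕ × ℕ × ℕ)) (h : IsLKTF a T)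
    (hne : ∃ t ∈ T, t.1 < t.2.2) :
    ∃ T'', IsLKTF a T'' ∧ KohnertMove (Tcells T'') (Tcells T) ∧
      (∑ t ∈ T'', (t.2.2 - t.1)) < ∑ t ∈ T, (t.2.2 - t.1) := by
  classical
  obtain ⟨h1, h2, h3, h4, h5⟩ := h
  obtain ⟨w, hw, hws⟩ := hne
  have hSne : (T.filter (fun t => t.1 < t.2.2)).Nonempty :=
    ⟨w, Finset.mem_filter.mpr ⟨hw, hws⟩⟩
  obtain ⟨tm, htm, htmax⟩ := Finset.exists_max_image _ (fun t => t.1) hSne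
  obtain ⟨x, hxeq⟩ : ∃ x, tm.1 = x := ⟨tm.1, rfl⟩
  have P1 : ∀ t ∈ T, t.1 < t.2.2 → t.1 ≤ x := by
    intro t ht hts
    have := htmax t (Finset.mem_filter.mpr ⟨ht, hts⟩)
    omega
  have hS'ne : ((T.filter (fun t => t.1 < t.2.2)).filter (fun t => t.1 = x)).Nonempty :=
    ⟨tm, Finset.mem_filter.mpr ⟨htm, hxeq⟩⟩
  obtain ⟨t0, ht0', ht0min⟩ := Finset.exists_min_image _ (fun t => t.2.1) hS'ne
  have ht0f := Finset.mem_filter.mp ht0'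
  have ht0S := Finset.mem_filter.mp ht0f.1
  have ht0 : t0 ∈ T := ht0S.1
  have ht0x : t0.1 = x := ht0f.2
  have ht0s : x < t0.2.2 := by have := ht0S.2; omega
  obtain ⟨c, hceq⟩ : ∃ c, t0.2.1 = c := ⟨t0.2.1, rfl⟩
  obtain ⟨i, hieq⟩ : ∃ i, t0.2.2 = i := ⟨t0.2.2, rfl⟩
  have P2 : ∀ t ∈ T, t.1 = x → t.1 < t.2.2 → c ≤ t.2.1 := by
    intro t ht htx hts
    have := ht0min t (Finset.mem_filter.mpr ⟨Finset.mem_filter.mpr ⟨ht, hts⟩, htx⟩)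
    omega
  have hlkt : IsLKTF a T := ⟨h1, h2, h3, h4, h5⟩
  have hb0 := h3 t0 ht0
  have hr0 := lkt_mem_range hlkt ht0
  rw [hieq] at hr0
  -- F1 : no cell at (x+1, c)
  have F1 : ∀ u ∈ T, ¬(u.1 = x + 1 ∧ u.2.1 = c) := by
    rintro u hu ⟨hu1, hu2⟩
    have hlt : t0.2.2 < u.2.2 := h5 t0 ht0 u hu (by omega) (by omega)
    have : u.1 ≤ x := P1 u hu (by omega)
    omega
  -- F2 : cells in row x+1 are weakly left of column c
  have F2 : ∀ u ∈ T, u.1 = x + 1 → u.2.1 ≤ c := by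
    intro u hu hu1
    by_contra hcon
    push_neg at hcon
    have hbu := h3 u hu
    have hL : u.2.2 = x + 1 := by
      rcases lt_or_eq_of_le hbu.2.1 with hlt | heq
      · have := P1 u hu (by omega); omega
      · omega
    have hru := lkt_mem_range hlkt hu
    obtain ⟨v, hv, hv1, hv2⟩ := lkt_exists_col_label hlkt (by omega) (by omega)
      (⟨by omega, by omega⟩ :
        maxPart a - a.getD (i - 1) 0 < u.2.1 ∧ u.2.1 ≤ maxPart a)
    have hvle : v.1 ≤ x := by
      have := h4 t0 ht0 v hv (by omega) (by omega)
      omega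
    have : v.2.2 < u.2.2 := h5 v hv u hu (by omega) (by omega)
    omega
  -- F3 : cells with label i strictly left of column c are strictly below row x
  have F3 : ∀ u ∈ T, u.2.2 = i → u.2.1 < c → x < u.1 := by
    intro u hu hul huc
    have hge : x ≤ u.1 := by
      have := h4 u hu t0 ht0 (by omega) (by omega)
      omega
    rcases lt_or_eq_of_le hge with hlt | heq
    · exact hlt
    · exfalso
      have : c ≤ u.2.1 := P2 u hu heq.symm (by omega)
      omega
  have ht1nT : ((x + 1, c, i) : ℕ × ℕ × ℕ) ∉ T := fun hcon => F1 _ hcon ⟨rfl, rfl⟩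
  have e1 : ((x + 1, c, i) : ℕ × ℕ × ℕ).1 = x + 1 := rfl
  have e2 : ((x + 1, c, i) : ℕ × ℕ × ℕ).2.1 = c := rfl
  have e3 : ((x + 1, c, i) : ℕ × ℕ × ℕ).2.2 = i := rfl
  have hmem : ∀ u : ℕ × ℕ × ℕ, u ∈ insert ((x + 1, c, i) : ℕ × ℕ × ℕ) (T.erase t0) ↔
      (u = (x + 1, c, i) ∨ (u ∈ T ∧ u ≠ t0)) := by
    intro u
    rw [Finset.mem_insert, Finset.mem_erase]
    tauto
  have ht1ne : ((x + 1, c, i) : ℕ × ℕ × ℕ) ∉ T.erase t0 :=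
    fun hcon => ht1nT (Finset.mem_of_mem_erase hcon)
  -- the swap map
  set g : ℕ × ℕ × ℕ → ℕ × ℕ × ℕ := fun u => if u = (x + 1, c, i) then t0 else u with hg
  have hg1 : g (x + 1, c, i) = t0 := by rw [hg]; simp
  have hg2 : ∀ u, u ≠ (x + 1, c, i) → g u = u := by intro u hu; rw [hg]; simp [hu]
  have himg : (insert ((x + 1, c, i) : ℕ × ℕ × ℕ) (T.erase t0)).image g = T := by
    rw [Finset.image_insert, hg1]
    have : (T.erase t0).image g = T.erase t0 := by
      apply Finset.image_congr (g := id) ?_ |>.trans (Finset.image_id)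
      intro u hu
      exact hg2 u (fun hcon => ht1ne (hcon ▸ hu))
    rw [this, Finset.insert_erase ht0]
  have hginj : Set.InjOn g ↑(insert ((x + 1, c, i) : ℕ × ℕ × ℕ) (T.erase t0)) := by
    intro u hu v hv huv
    by_cases h1' : u = (x + 1, c, i) <;> by_cases h2' : v = (x + 1, c, i)
    · rw [h1', h2']
    · exfalso
      rw [h1', hg1, hg2 v h2'] at huv
      rcases (hmem v).mp (by exact_mod_cast hv) with hcon | ⟨_, hvne⟩
      · exact h2' hcon
      · exact hvne huv.symm
    · exfalso
      rw [h2', hg1, hg2 u h1'] at huv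
      rcases (hmem u).mp (by exact_mod_cast hu) with hcon | ⟨_, hune⟩
      · exact h1' hcon
      · exact hune huv
    · rw [hg2 u h1', hg2 v h2'] at huv; exact huv
  have hlkt'' : IsLKTF a (insert ((x + 1, c, i) : ℕ × ℕ × ℕ) (T.erase t0)) := by
    refine ⟨?_, ?_, ?_, ?_, ?_⟩
    · -- condition 1
      intro u hu v hv hrow hcol
      rcases (hmem u).mp hu with hequ | ⟨huT, hune⟩ <;>
        rcases (hmem v).mp hv with heqv | ⟨hvT, hvne⟩
      · rw [hequ, heqv]
      · exfalso
        subst hequ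
        exact F1 v hvT ⟨by omega, by omega⟩
      · exfalso
        subst heqv
        exact F1 u huT ⟨by omega, by omega⟩
      · exact h1 u huT v hvT hrow hcol
    · -- condition 2
      intro j hj c0
      have key : ((insert ((x + 1, c, i) : ℕ × ℕ × ℕ) (T.erase t0)).filter
            (fun t => t.2.1 = c0 ∧ t.2.2 = j)).card =
          (T.filter (fun t => t.2.1 = c0 ∧ t.2.2 = j)).card := by
        conv_rhs => rw [← himg]
        rw [card_filter_image _ g hginj]
        congr 1
        apply Finset.filter_congr
        intro u _
        by_cases hu1 : u = (x + 1, c, i)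
        · rw [hu1, hg1]
          simp only
          constructor
          · rintro ⟨ha1, ha2⟩; exact ⟨by omega, by omega⟩
          · rintro ⟨ha1, ha2⟩; exact ⟨by omega, by omega⟩
        · rw [hg2 u hu1]
      rw [key]
      exact h2 j hj c0
    · -- condition 3
      intro u hu
      rcases (hmem u).mp hu with hequ | ⟨huT, _⟩
      · subst hequ
        exact ⟨by omega, by omega, by omega, by omega⟩
      · exact h3 u huT
    · -- condition 4
      intro u hu v hv hlab hcol
      rcases (hmem u).mp hu with hequ | ⟨huT, hune⟩ <;>
        rcases (hmem v).mp hv with heqv | ⟨hvT, hvne⟩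
      · subst hequ; subst heqv; omega
      · subst hequ
        have : v.1 ≤ t0.1 := h4 t0 ht0 v hvT (by omega) (by omega)
        simp only
        omega
      · subst heqv
        have := F3 u huT (by omega) (by omega)
        simp only
        omega
      · exact h4 u huT v hvT hlab hcol
    · -- condition 5
      intro u hu v hv hcol hrow
      rcases (hmem u).mp hu with hequ | ⟨huT, hune⟩ <;>
        rcases (hmem v).mp hv with heqv | ⟨hvT, hvne⟩
      · subst hequ; subst heqv; omega
      · subst hequ
        have : t0.2.2 < v.2.2 := h5 t0 ht0 v hvT (by omega) (by omega)
        simp only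
        omega
      · subst heqv
        have hult : u.1 < x := by
          rcases lt_or_eq_of_le (by omega : u.1 ≤ x) with hlt | heq
          · exact hlt
          · exfalso
            exact hune (h1 u huT t0 ht0 (by omega) (by omega))
        have : u.2.2 < t0.2.2 := h5 u huT t0 ht0 (by omega) (by omega)
        simp only
        omega
      · exact h5 u huT v hvT hcol hrow
  -- underlying cells
  have hxcT : ((x, c) : ℕ × ℕ) ∈ Tcells T :=
    Finset.mem_image.mpr ⟨t0, ht0, Prod.ext ht0x hceq⟩
  have hx1cT : ((x + 1, c) : ℕ × ℕ) ∉ Tcells T := by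
    intro hcon
    obtain ⟨u, hu, hu2⟩ := Finset.mem_image.mp hcon
    have e1 : u.1 = x + 1 := congrArg Prod.fst hu2
    have e2 : u.2.1 = c := congrArg Prod.snd hu2
    exact F1 u hu ⟨e1, e2⟩
  have hcells : Tcells (insert ((x + 1, c, i) : ℕ × ℕ × ℕ) (T.erase t0)) =
      insert (x + 1, c) ((Tcells T).erase (x, c)) := by
    unfold Tcells
    rw [Finset.image_insert]
    congr 1
    apply Finset.ext
    intro q
    constructor
    · intro hq
      obtain ⟨u, hu, rfl⟩ := Finset.mem_image.mp hq
      have huE := Finset.mem_erase.mp hu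
      rw [Finset.mem_erase]
      constructor
      · intro hcon
        apply huE.1
        have e1 : u.1 = x := congrArg Prod.fst hcon
        have e2 : u.2.1 = c := congrArg Prod.snd hcon
        exact h1 u huE.2 t0 ht0 (by omega) (by omega)
      · exact Finset.mem_image.mpr ⟨u, huE.2, rfl⟩
    · intro hq
      have hqE := Finset.mem_erase.mp hq
      obtain ⟨u, hu, rfl⟩ := Finset.mem_image.mp hqE.2
      refine Finset.mem_image.mpr ⟨u, Finset.mem_erase.mpr ⟨?_, hu⟩, rfl⟩
      intro hcon
      apply hqE.1
      rw [hcon]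
      exact Prod.ext ht0x hceq
  refine ⟨insert ((x + 1, c, i) : ℕ × ℕ × ℕ) (T.erase t0), hlkt'', ?_, ?_⟩
  · -- Kohnert move
    refine ⟨x + 1, c, x, ?_, ?_, by omega, by omega, ?_, ?_, ?_⟩
    · rw [hcells]; exact Finset.mem_insert_self _ _
    · intro c' hc'
      rw [hcells] at hc'
      rcases Finset.mem_insert.mp hc' with heq | hmem'
      · have : c' = c := congrArg Prod.snd heq
        omega
      · obtain ⟨u, hu, hu2⟩ := Finset.mem_image.mp (Finset.mem_of_mem_erase hmem')
        have e1 : u.1 = x + 1 := congrArg Prod.fst hu2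
        have e2 : u.2.1 = c' := congrArg Prod.snd hu2
        have := F2 u hu e1
        omega
    · rw [hcells]
      intro hcon
      rcases Finset.mem_insert.mp hcon with heq | hmem'
      · have : x = x + 1 := congrArg Prod.fst heq
        omega
      · exact (Finset.mem_erase.mp hmem').1 rfl
    · intro r'' h1'' h2''
      omega
    · rw [hcells, Finset.erase_insert, Finset.insert_erase hxcT]
      intro hcon
      exact hx1cT (Finset.mem_of_mem_erase hcon)
  · -- sum decreases
    rw [Finset.sum_insert ht1ne]
    rw [← Finset.add_sum_erase T _ ht0]
    simp only
    omega
lemma lkt_reachable (a : List ℕ) (T : Finset (ℕ × ℕ × ℕ)) (h : IsLKTF a T) :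
    Relation.ReflTransGen KohnertMove (lockDiagram a) (Tcells T) := by
  have main : ∀ n (T : Finset (ℕ × ℕ × ℕ)), (∑ t ∈ T, (t.2.2 - t.1)) = n → IsLKTF a T →
      Relation.ReflTransGen KohnertMove (lockDiagram a) (Tcells T) := by
    intro n
    induction n using Nat.strong_induction_on with
    | _ n ih =>
      intro T hsum hT
      by_cases hz : ∃ t ∈ T, t.1 < t.2.2
      · obtain ⟨T'', hT'', hmove, hlt⟩ := lkt_inverse a T hT hz
        exact (ih _ (by omega) T'' rfl hT'').tail hmove
      · push_neg at hz
        have hall : ∀ t ∈ T, t.2.2 = t.1 := by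
          intro t ht
          have h1 := hT.2.2.1 t ht
          have h2 := hz t ht
          omega
        rw [lkt_min a T hT hall]
  exact main _ T rfl h
/-- The set of underlying diagrams of lock Kohnert tableaux of content `a` is
closed under Kohnert moves, and equals the set of lock Kohnert diagrams of `a`. -/
theorem lkt_diagrams_closed_and_eq (a : List ℕ) :
    (∀ T : Finset (ℕ × ℕ × ℕ), ∀ D' : Finset (ℕ × ℕ), IsLKTF a T →
        KohnertMove (Tcells T) D' → ∃ T', IsLKTF a T' ∧ Tcells T' = D') ∧
      {D : Finset (ℕ × ℕ) | ∃ T, IsLKTF a T ∧ Tcells T = D} =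
        {D : Finset (ℕ × ℕ) | Relation.ReflTransGen KohnertMove (lockDiagram a) D} := by
  constructor
  · intro T D' h hm
    exact lkt_closure a T D' h hm
  · apply Set.ext
    intro D
    simp only [Set.mem_setOf_eq]
    constructor
    · rintro ⟨T, hT, rfl⟩
      exact lkt_reachable a T hT
    · intro hreach
      induction hreach with
      | refl => exact ⟨_, (lock_base a).1, (lock_base a).2⟩
      | tail hr hmove ih =>
        obtain ⟨T, hT, rfl⟩ := ih
        exact lkt_closure a T _ hT hmove
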